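/- Let X = {0,1}. The family of functions (f_n : X^n → {0,1})_{n≥1} defined by f_n(x) = 1 if |{i : x_i = 1}| ≥ 10 + |{i : x_i = 0}| and f_n(x) = 0 otherwise, is not computable with infinite memory. -/

import Mathlib

/-- A finite bidirectional connected network on `n` nodes, with port labelings:
each node `i` has a bijection between its neighbors and the port numbers
`{0, …, deg(i) - 1}`. -/
structure PortNetwork (n : ℕ) where
  adj : Fin n → Fin n → Bool
  symm : ∀ i j, adj i j → adj j i
  loopless : ∀ i, ¬ adj i i
  connected : ∀ i j : Fin n, Relation.ReflTransGen (fun a b => adj a b) i j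
  port : ∀ i : Fin n, {j // adj i j} ≃ Fin (Fintype.card {j // adj i j})

/-- The degree of node `i`. -/
def PortNetwork.deg {n : ℕ} (N : PortNetwork n) (i : Fin n) : ℕ :=
  Fintype.card {j // N.adj i j}

/-- An algorithm: a family of transition functions
`A_d : X × Z_d × Y × M^d → Z_d × Y × M^d`, together with the distinguished
initial ("∅") elements of `Z_d`, `Y`, `M`. -/
structure Algorithm (X Y M : Type) (Z : ℕ → Type) where
  trans : ∀ d : ℕ, X → Z d → Y → (Fin d → M) → Z d × Y × (Fin d → M)
  z0 : ∀ d, Z d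
  y0 : Y
  m0 : M

/-- The synchronous evolution of the network: `A.run N x t i` is the state
`(z_i(t), y_i(t), (m_{i,p}(t))_p)` of node `i` at time `t`, starting from
initial values `x`.  At each round, node `i` receives through its `k`-th port
the message sent by the neighbor `j_k` on that port, namely the message that
`j_k` put on its own port leading back to `i`. -/
def Algorithm.run {X Y M : Type} {Z : ℕ → Type} (A : Algorithm X Y M Z) {n : ℕ}
    (N : PortNetwork n) (x : Fin n → X) :
    ℕ → ∀ i : Fin n, Z (N.deg i) × Y × (Fin (N.deg i) → M)
  | 0 => fun _ => (A.z0 _, A.y0, fun _ => A.m0)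
  | t + 1 => fun i =>
      A.trans (N.deg i) (x i) (A.run N x t i).1 (A.run N x t i).2.1
        (fun k =>
          let j := (N.port i).symm k
          (A.run N x t j.1).2.2 (N.port j.1 ⟨i, N.symm _ _ j.2⟩))

/-- `y` is the final output of the execution of `A` on the network `N` with
initial values `x`. -/
def Algorithm.FinalOutput {X Y M : Type} {Z : ℕ → Type} (A : Algorithm X Y M Z) {n : ℕ}
    (N : PortNetwork n) (x : Fin n → X) (y : Y) : Prop :=
  ∃ t', ∀ t, t' ≤ t → ∀ i, (A.run N x t i).2.1 = y

/-- A family of functions `(f_n : X^n → Y)_{n ≥ 1}` is computable if there is an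
algorithm with `Y`, `M` and all `Z_d` finite which, on every connected network
with ports and every input, produces the final output `f_n(x)`. -/
def ComputableFamily {X Y : Type} (f : ∀ n, (Fin n → X) → Y) : Prop :=
  ∃ (M : Type) (Z : ℕ → Type) (A : Algorithm X Y M Z),
    Finite Y ∧ Finite M ∧ (∀ d, Finite (Z d)) ∧
    ∀ n, 0 < n → ∀ (N : PortNetwork n) (x : Fin n → X),
      A.FinalOutput N x (f n x)

/-- Computability with infinite memory: `Y` and the `Z_d` are allowed to be
countable (the message alphabet `M` stays finite). -/
def ComputableWithInfiniteMemory {X Y : Type} (f : ∀ n, (Fin n → X) → Y) : Prop :=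
  ∃ (M : Type) (Z : ℕ → Type) (A : Algorithm X Y M Z),
    Countable Y ∧ Finite M ∧ (∀ d, Countable (Z d)) ∧
    ∀ n, 0 < n → ∀ (N : PortNetwork n) (x : Fin n → X),
      A.FinalOutput N x (f n x)

def ringAdj (k : ℕ) (i j : Fin (k+3)) : Bool := decide (j = i + 1 ∨ j = i - 1)

lemma fin_one_ne_zero (k : ℕ) : (1 : Fin (k+3)) ≠ 0 := by
  simp [Fin.ext_iff]

lemma add_one_ne (k : ℕ) (i : Fin (k+3)) : i + 1 ≠ i := by
  intro h
  have : i + 1 = i + 0 := by simp [h]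
  exact fin_one_ne_zero k (add_left_cancel this)

lemma sub_one_ne (k : ℕ) (i : Fin (k+3)) : i - 1 ≠ i := by
  intro h
  have h2 : i - 1 + 1 = i + 1 := by rw [h]
  rw [sub_add_cancel] at h2
  exact add_one_ne k i h2.symm

lemma ne_add_two (k : ℕ) (i : Fin (k+3)) : i ≠ i + 1 + 1 := by
  intro h
  have h1 : i + 0 = i + (1 + 1) := by rw [add_zero, ← add_assoc]; exact h
  have h2 := (add_left_cancel h1).symm
  have h3 : ((1 + 1 : Fin (k+3)) : ℕ) = 0 := by rw [h2]; rfl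
  have hv : ((1 + 1 : Fin (k+3)) : ℕ) = 2 := by
    have e : (1 + 1 : Fin (k+3)) = 2 := by ext; simp [Fin.val_add, Fin.val_two]
    rw [e, Fin.val_two]
  omega

lemma add_one_ne_sub_one (k : ℕ) (i : Fin (k+3)) : i + 1 ≠ i - 1 := by
  intro h
  have h2 : i + 1 + 1 = i - 1 + 1 := by rw [h]
  rw [sub_add_cancel] at h2
  exact ne_add_two k i h2.symm

def ringEquiv (k : ℕ) (i : Fin (k+3)) : {j // ringAdj k i j} ≃ Fin 2 where
  toFun j := if j.1 = i + 1 then 0 else 1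
  invFun p := if p = 0 then ⟨i + 1, by simp [ringAdj]⟩ else ⟨i - 1, by simp [ringAdj]⟩
  left_inv j := by
    rcases j with ⟨j, hj⟩
    simp only [ringAdj, decide_eq_true_eq] at hj
    rcases hj with rfl | rfl
    · simp
    · simp [(add_one_ne_sub_one k i).symm]
  right_inv p := by
    fin_cases p
    · simp
    · simp [Ne.symm (add_one_ne_sub_one k i)]

lemma ringDeg (k : ℕ) (i : Fin (k+3)) : Fintype.card {j // ringAdj k i j} = 2 := by
  rw [Fintype.card_congr (ringEquiv k i)]; simp

open Fin.NatCast in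
lemma ring_connected (k : ℕ) (i j : Fin (k+3)) :
    Relation.ReflTransGen (fun a b => ringAdj k a b) i j := by
  have step : ∀ a : Fin (k+3), Relation.ReflTransGen (fun a b => ringAdj k a b) a (a + 1) :=
    fun a => Relation.ReflTransGen.single (by simp [ringAdj])
  have main : ∀ (m : ℕ) (a : Fin (k+3)),
      Relation.ReflTransGen (fun a b => ringAdj k a b) a (a + (m : Fin (k+3))) := by
    intro m
    induction m with
    | zero => intro a; simpa using Relation.ReflTransGen.refl
    | succ m ih =>
        intro a
        have := (ih a).trans (step (a + (m : Fin (k+3))))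
        simpa [add_assoc, Nat.cast_add, Nat.cast_one] using this
  have hj : j = i + (((j - i).val : ℕ) : Fin (k+3)) := by
    rw [Fin.cast_val_eq_self]
    rw [add_sub_cancel]
  rw [hj]
  exact main _ i

def ringNet (k : ℕ) : PortNetwork (k+3) where
  adj := ringAdj k
  symm := by
    intro i j h
    simp only [ringAdj, decide_eq_true_eq] at *
    rcases h with rfl | rfl
    · right; rw [add_sub_cancel_right]
    · left; rw [sub_add_cancel]
  loopless := by
    intro i h
    simp only [ringAdj, decide_eq_true_eq] at h
    rcases h with h | h
    · exact add_one_ne k i h.symm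
    · exact sub_one_ne k i h.symm
  connected := ring_connected k
  port := fun i => (ringEquiv k i).trans (finCongr (ringDeg k i).symm)

lemma ringNet_deg (k : ℕ) (i : Fin (k+3)) : (ringNet k).deg i = 2 := ringDeg k i

lemma ringNet_port_symm (k : ℕ) (i : Fin (k+3)) (p : Fin ((ringNet k).deg i)) :
    (((ringNet k).port i).symm p).1 = if p.val = 0 then i + 1 else i - 1 := by
  show ((ringEquiv k i).symm ((finCongr (ringDeg k i).symm).symm p)).1 = _
  rw [finCongr_symm]
  by_cases h : p.val = 0
  · have : finCongr (ringDeg k i) p = 0 := by ext; exact h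
    rw [this]; simp [ringEquiv, h]
  · have hne : finCongr (ringDeg k i) p ≠ 0 := by
      intro hc; apply h
      have := congrArg Fin.val hc; exact this
    show ((ringEquiv k i).symm (finCongr (ringDeg k i) p)).1 = _
    simp only [ringEquiv, Equiv.coe_fn_symm_mk, if_neg hne, if_neg h]

lemma ringNet_port_val (k : ℕ) (i : Fin (k+3)) (j : {j // (ringNet k).adj i j}) :
    ((ringNet k).port i j).val = if j.1 = i + 1 then 0 else 1 := by
  show ((finCongr (ringDeg k i).symm) ((ringEquiv k i) j)).val = _
  simp only [finCongr_apply, Fin.coe_cast]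
  by_cases h : j.1 = i + 1 <;> simp [ringEquiv, h]

lemma ring_return (k : ℕ) (i : Fin (k+3)) (p : Fin ((ringNet k).deg i)) :
    (((ringNet k).port ((((ringNet k).port i).symm p).1))
      ⟨i, (ringNet k).symm _ _ ((((ringNet k).port i).symm p).2)⟩).val
      = if p.val = 0 then 1 else 0 := by
  rw [ringNet_port_val]
  have hnb := ringNet_port_symm k i p
  by_cases h : p.val = 0
  · rw [if_pos h] at hnb
    rw [if_pos h]
    simp only [hnb]
    rw [if_neg]
    exact fun hc => ne_add_two k i hc
  · rw [if_neg h] at hnb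
    rw [if_neg h]
    simp [hnb, sub_add_cancel]

section Helpers
variable {Y M : Type} {Z : ℕ → Type}

lemma heq_fst {d d'} (h : d = d') {p : Z d × Y × (Fin d → M)} {q : Z d' × Y × (Fin d' → M)}
    (hp : HEq p q) : HEq p.1 q.1 := by subst h; rw [eq_of_heq hp]

lemma heq_out {d d'} (h : d = d') {p : Z d × Y × (Fin d → M)} {q : Z d' × Y × (Fin d' → M)}
    (hp : HEq p q) : p.2.1 = q.2.1 := by subst h; rw [eq_of_heq hp]

lemma heq_msg {d d'} (h : d = d') {p : Z d × Y × (Fin d → M)} {q : Z d' × Y × (Fin d' → M)}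
    (hp : HEq p q) : HEq p.2.2 q.2.2 := by subst h; rw [eq_of_heq hp]

lemma heq_app {d d'} (h : d = d') {m : Fin d → M} {m' : Fin d' → M} (hm : HEq m m')
    {p : Fin d} {p' : Fin d'} (hp : p.val = p'.val) : m p = m' p' := by
  subst h; rw [eq_of_heq hm]; congr 1; exact Fin.ext hp

lemma heq_fun {d d'} (h : d = d') {m : Fin d → M} {m' : Fin d' → M}
    (hm : ∀ k : Fin d, m k = m' ⟨k.val, h ▸ k.isLt⟩) : HEq m m' := by
  subst h; exact heq_of_eq (funext fun k => by simpa using hm k)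

variable {X : Type}

lemma heq_init (A : Algorithm X Y M Z) {d d'} (h : d = d') :
    HEq ((A.z0 d, A.y0, fun _ => A.m0) : Z d × Y × (Fin d → M))
        ((A.z0 d', A.y0, fun _ => A.m0) : Z d' × Y × (Fin d' → M)) := by
  subst h; rfl

lemma heq_trans_congr (A : Algorithm X Y M Z) {d d'} (h : d = d') (x : X)
    {z : Z d} {z' : Z d'} {y y' : Y} {m : Fin d → M} {m' : Fin d' → M}
    (hz : HEq z z') (hy : y = y') (hm : HEq m m') :
    HEq (A.trans d x z y m) (A.trans d' x z' y' m') := by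
  subst h; rw [eq_of_heq hz, hy, eq_of_heq hm]

lemma ring_run_heq (A : Algorithm (Fin 2) Y M Z) (k k' : ℕ) :
    ∀ (t : ℕ) (i : Fin (k+3)) (j : Fin (k'+3)),
      HEq (A.run (ringNet k) (fun _ => 1) t i) (A.run (ringNet k') (fun _ => 1) t j) := by
  intro t
  induction t with
  | zero =>
      intro i j
      exact heq_init A ((ringNet_deg k i).trans (ringNet_deg k' j).symm)
  | succ t ih =>
      intro i j
      have h : (ringNet k).deg i = (ringNet k').deg j :=
        (ringNet_deg k i).trans (ringNet_deg k' j).symm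
      show HEq (A.trans _ _ _ _ _) (A.trans _ _ _ _ _)
      refine heq_trans_congr A h 1 (heq_fst h (ih i j)) (heq_out h (ih i j)) ?_
      refine heq_fun h ?_
      intro p
      refine heq_app ((ringNet_deg k _).trans (ringNet_deg k' _).symm)
        (heq_msg ((ringNet_deg k _).trans (ringNet_deg k' _).symm) (ih _ _)) ?_
      rw [ring_return, ring_return]

end Helpers

/-- deciding whether the number of nodes with value 1 is at least
10 plus the number of nodes with value 0 is not computable with infinite
memory. -/
theorem ten_plus_comparison_not_computable :
    ¬ ComputableWithInfiniteMemory
      (fun n (x : Fin n → Fin 2) =>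
        if 10 + (Finset.univ.filter fun i => x i = 0).card ≤
            (Finset.univ.filter fun i => x i = 1).card
        then (1 : Fin 2) else 0) := by
  rintro ⟨M, Z, A, -, -, -, hA⟩
  obtain ⟨t3, h3⟩ := hA 3 (by norm_num) (ringNet 0) (fun _ => 1)
  obtain ⟨t12, h12⟩ := hA 12 (by norm_num) (ringNet 9) (fun _ => 1)
  have e3 := h3 (max t3 t12) (le_max_left _ _) 0
  have e12 := h12 (max t3 t12) (le_max_right _ _) 0
  have key := heq_out ((ringNet_deg 0 0).trans (ringNet_deg 9 0).symm)
    (ring_run_heq A 0 9 (max t3 t12) 0 0)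
  have : (if 10 + (Finset.univ.filter fun i : Fin 3 => (1 : Fin 2) = 0).card ≤
            (Finset.univ.filter fun i : Fin 3 => (1 : Fin 2) = 1).card
        then (1 : Fin 2) else 0) =
      (if 10 + (Finset.univ.filter fun i : Fin 12 => (1 : Fin 2) = 0).card ≤
            (Finset.univ.filter fun i : Fin 12 => (1 : Fin 2) = 1).card
        then (1 : Fin 2) else 0) := e3.symm.trans (key.trans e12)
  revert this
  decide
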